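/- For any graph G, vertex u, and set S of vertices with u ∈ S and u ∉ Odd_G(S): Odd_{G⋆u}(S) = Odd_G(S) Δ (N_G(u) ∩ S), and consequently u ∉ Odd_{G⋆u}(S). -/

import Mathlib

open Set

/-- The three measurement planes. -/
inductive MPlane | XY | XZ | YZ
deriving DecidableEq

/-- The odd neighbourhood of a set `K`: vertices with an odd number of neighbours in `K`. -/
def oddNbhd {V : Type*} (G : SimpleGraph V) (K : Set V) : Set V :=
  {u | Odd (K ∩ G.neighborSet u).ncard}

/-- `(g, prec)` is a gflow for the labelled open graph `(G, I, O, lam)`. -/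
structure GFlow {V : Type*} (G : SimpleGraph V) (I O : Set V) (lam : V → MPlane)
    (g : V → Set V) (prec : V → V → Prop) : Prop where
  irrefl : ∀ v, ¬ prec v v
  trans : ∀ u v w, prec u v → prec v w → prec u w
  noInput : ∀ v, v ∉ O → g v ∩ I = ∅
  g1 : ∀ v, v ∉ O → ∀ w ∈ g v, w ≠ v → prec v w
  g2 : ∀ v, v ∉ O → ∀ w ∈ oddNbhd G (g v), w ≠ v → prec v w
  gXY : ∀ v, v ∉ O → lam v = MPlane.XY → v ∉ g v ∧ v ∈ oddNbhd G (g v)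
  gXZ : ∀ v, v ∉ O → lam v = MPlane.XZ → v ∈ g v ∧ v ∈ oddNbhd G (g v)
  gYZ : ∀ v, v ∉ O → lam v = MPlane.YZ → v ∈ g v ∧ v ∉ oddNbhd G (g v)

/-- Local complementation of `G` about the vertex `u`: complement the edges
among the neighbours of `u`. -/
def localComp {V : Type*} (G : SimpleGraph V) (u : V) : SimpleGraph V where
  Adj x y := x ≠ y ∧ Xor' (G.Adj x y) (G.Adj u x ∧ G.Adj u y)
  symm := by
    constructor
    rintro x y ⟨hxy, h⟩
    refine ⟨hxy.symm, ?_⟩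
    rw [G.adj_comm y x, and_comm]
    exact h
  loopless := by constructor; rintro x ⟨h, _⟩; exact h rfl

/-- The pivot of `G` about the edge `u ∼ v`. -/
def pivot {V : Type*} (G : SimpleGraph V) (u v : V) : SimpleGraph V :=
  localComp (localComp (localComp G u) v) u

lemma odd_ncard_symmDiff_aux {V : Type*} [Fintype V] (A B : Set V) :
    Odd ((symmDiff A B).ncard) ↔ Xor' (Odd A.ncard) (Odd B.ncard) := by
  have hA : A.Finite := Set.toFinite _
  have hB : B.Finite := Set.toFinite _
  have h1 : (A ∩ B).ncard + (A \ B).ncard = A.ncard :=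
    Set.ncard_inter_add_ncard_diff_eq_ncard A B hA
  have h2 : (B ∩ A).ncard + (B \ A).ncard = B.ncard :=
    Set.ncard_inter_add_ncard_diff_eq_ncard B A hB
  have h3 : (symmDiff A B).ncard = (A \ B).ncard + (B \ A).ncard := by
    rw [Set.symmDiff_def]
    exact Set.ncard_union_eq (disjoint_sdiff_sdiff) hA.diff hB.diff
  have h4 : (A ∩ B).ncard = (B ∩ A).ncard := by rw [Set.inter_comm]
  rw [h3, ← h1, ← h2, h4]
  simp only [Nat.odd_iff, Xor', Xor]
  omega

/-- For `u ∈ S` with `u ∉ Odd_G(S)` (the YZ case of the local-complementation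
lemma): `Odd_{G⋆u}(S) = Odd_G(S) Δ (N_G(u) ∩ S)`, and consequently
`u ∉ Odd_{G⋆u}(S)`. -/
theorem oddNbhd_localComp_of_mem_not_odd {V : Type*} [Fintype V] (G : SimpleGraph V)
    (u : V) (S : Set V) (huS : u ∈ S) (hu : u ∉ oddNbhd G S) :
    oddNbhd (localComp G u) S = symmDiff (oddNbhd G S) (G.neighborSet u ∩ S) ∧
      u ∉ oddNbhd (localComp G u) S := by
  classical
  have key : oddNbhd (localComp G u) S = symmDiff (oddNbhd G S) (G.neighborSet u ∩ S) := by
    ext x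
    by_cases hux : G.Adj u x
    · -- x is a neighbour of u
      have hset : S ∩ (localComp G u).neighborSet x
          = symmDiff (S ∩ G.neighborSet x) (S ∩ (G.neighborSet u \ {x})) := by
        ext y
        by_cases hyx : y = x
        · subst hyx
          simp [localComp, SimpleGraph.neighborSet, symmDiff]
        · have hne : x ≠ y := fun h => hyx h.symm
          simp only [localComp, SimpleGraph.neighborSet, Set.mem_inter_iff, Set.mem_setOf_eq,
            Set.mem_symmDiff, Set.mem_diff, Set.mem_singleton_iff, Xor', Xor, hux, true_and]
          tauto
      have hcardB : Odd ((S ∩ (G.neighborSet u \ {x})).ncard) ↔ x ∈ S := by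
        have heq : S ∩ (G.neighborSet u \ {x}) = (S ∩ G.neighborSet u) \ {x} := by
          ext y; simp [Set.mem_diff]; tauto
        have heven : ¬ Odd ((S ∩ G.neighborSet u).ncard) := hu
        by_cases hxS : x ∈ S
        · have hxmem : x ∈ S ∩ G.neighborSet u := ⟨hxS, hux⟩
          have := Set.ncard_diff_singleton_add_one hxmem (Set.toFinite _)
          rw [heq]
          simp only [Nat.odd_iff] at heven ⊢
          constructor
          · intro _; exact hxS
          · intro _; omega
        · have : S ∩ (G.neighborSet u \ {x}) = S ∩ G.neighborSet u := by
            ext y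
            simp only [Set.mem_inter_iff, Set.mem_diff, Set.mem_singleton_iff]
            constructor
            · rintro ⟨h1, h2, _⟩; exact ⟨h1, h2⟩
            · rintro ⟨h1, h2⟩
              refine ⟨h1, h2, ?_⟩
              rintro rfl; exact hxS h1
          rw [this]
          simp [heven, hxS]
      simp only [oddNbhd, Set.mem_setOf_eq, Set.mem_symmDiff, Set.mem_inter_iff,
        SimpleGraph.mem_neighborSet]
      rw [hset, odd_ncard_symmDiff_aux, hcardB]
      by_cases hxS : x ∈ S <;> simp [hxS, hux, Xor', Xor] <;> tauto
    · -- x is not a neighbour of u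
      have hset : S ∩ (localComp G u).neighborSet x = S ∩ G.neighborSet x := by
        ext y
        have hAdj : (localComp G u).Adj x y ↔ G.Adj x y := by
          change x ≠ y ∧ Xor' (G.Adj x y) (G.Adj u x ∧ G.Adj u y) ↔ _
          unfold Xor'
          constructor
          · rintro ⟨hne, ⟨h1, _⟩ | ⟨⟨h1, _⟩, _⟩⟩
            · exact h1
            · exact absurd h1 hux
          · intro h
            exact ⟨h.ne, Or.inl ⟨h, fun hc => hux hc.1⟩⟩
        simp only [Set.mem_inter_iff, SimpleGraph.mem_neighborSet, hAdj]
      simp only [oddNbhd, Set.mem_setOf_eq, Set.mem_symmDiff, Set.mem_inter_iff,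
        SimpleGraph.mem_neighborSet]
      rw [hset]
      tauto
  refine ⟨key, ?_⟩
  rw [key]
  rw [Set.mem_symmDiff]
  rintro (⟨h1, _⟩ | ⟨⟨h1, _⟩, _⟩)
  · exact hu h1
  · exact G.irrefl h1
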